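/- Let G be a finite group and p a prime. The number of conjugacy classes of p-regular elements of G equals the number of conjugacy classes of p-regular elements of G/O_p(G), where O_p(G) is the largest normal p-subgroup of G. -/

import Mathlib

section Aux

open Subgroup
open scoped IsMulCommutative

private lemma exists_inv_modEq {a b : ℕ} (h : Nat.Coprime a b) : ∃ s, a * s ≡ 1 [MOD b] := by
  rcases lt_or_ge 1 b with hb | hb
  · obtain ⟨s, -, hs⟩ := Nat.exists_mul_mod_eq_one_of_coprime h hb
    exact ⟨s, by unfold Nat.ModEq; rw [hs, Nat.mod_eq_of_lt hb]⟩
  · interval_cases b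
    · exact ⟨1, by simpa [Nat.ModEq] using Nat.coprime_zero_right a |>.mp h⟩
    · exact ⟨1, Nat.modEq_one⟩

/-- Any `p`-regular element of a quotient lifts to a `p`-regular element. -/
private lemma lift_p_regular {G Q : Type*} [Group G] [Finite G] [Group Q] {f : G →* Q}
    (hf : Function.Surjective f) {p : ℕ} (hp : p.Prime) (q : Q) (hq : ¬ p ∣ orderOf q) :
    ∃ g : G, ¬ p ∣ orderOf g ∧ f g = q := by
  obtain ⟨g₀, rfl⟩ := hf q
  set m := orderOf g₀ with hm
  have hm0 : m ≠ 0 := (orderOf_pos g₀).ne'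
  set a := p ^ m.factorization p with ha
  set b := m / p ^ m.factorization p with hb
  have hab : a * b = m := Nat.ordProj_mul_ordCompl_eq_self m p
  have hpb : ¬ p ∣ b := Nat.not_dvd_ordCompl hp hm0
  have hcop : Nat.Coprime a b := (hp.coprime_iff_not_dvd.mpr hpb).pow_left _
  obtain ⟨s, hs⟩ := exists_inv_modEq hcop
  refine ⟨g₀ ^ (a * s), ?_, ?_⟩
  · intro hdvd
    have hgb : (g₀ ^ (a * s)) ^ b = 1 := by
      rw [← pow_mul]
      have : a * s * b = m * s := by rw [mul_right_comm, hab]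
      rw [this, pow_mul, pow_orderOf_eq_one, one_pow]
    exact hpb (hdvd.trans (orderOf_dvd_of_pow_eq_one hgb))
  · have hq_dvd_m : orderOf (f g₀) ∣ a * b := hab ▸ orderOf_map_dvd f g₀
    have hqa : Nat.Coprime (orderOf (f g₀)) a :=
      ((hp.coprime_iff_not_dvd.mpr hq).symm).pow_right _
    have hqb : orderOf (f g₀) ∣ b := hqa.dvd_of_dvd_mul_left hq_dvd_m
    rw [map_pow]
    calc (f g₀) ^ (a * s) = (f g₀) ^ 1 :=
          pow_eq_pow_iff_modEq.mpr (Nat.ModEq.of_dvd hqb hs)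
      _ = f g₀ := pow_one _

/-- Two `p`-regular elements in the same coset of an abelian normal `p`-subgroup are
conjugate. -/
private lemma isConj_of_abelian {G : Type*} [Group G] [Finite G] {p : ℕ} (hp : p.Prime)
    (Z : Subgroup G) [Z.Normal] [IsMulCommutative Z] (hZ : IsPGroup p Z) {x y : G}
    (hx : ¬ p ∣ orderOf x) (hy : ¬ p ∣ orderOf y) (hxy : x⁻¹ * y ∈ Z) : IsConj x y := by
  set n : G := x⁻¹ * y with hn
  have hyn : y = x * n := by rw [hn, mul_inv_cancel_left]
  -- the order of `n` is a power of `p`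
  obtain ⟨k, hk⟩ := hZ ⟨n, hxy⟩
  have hordn : orderOf n ∣ p ^ k := by
    apply orderOf_dvd_of_pow_eq_one
    have := congrArg (Subgroup.subtype Z) hk
    simpa using this
  obtain ⟨j, _, hj⟩ := (Nat.dvd_prime_pow hp).mp hordn
  set m := orderOf x * orderOf y with hm
  have hpm : ¬ p ∣ m := by
    intro h
    rcases (Nat.Prime.dvd_mul hp).mp h with h | h
    exacts [hx h, hy h]
  have hcop : Nat.Coprime m (orderOf n) := by
    rw [hj]
    exact (hp.coprime_iff_not_dvd.mpr hpm).symm.pow_right _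
  obtain ⟨s, hs⟩ := exists_inv_modEq hcop
  have hxm : x ^ m = 1 := by rw [hm, pow_mul, pow_orderOf_eq_one, one_pow]
  have hym : y ^ m = 1 := by rw [hm, mul_comm, pow_mul, pow_orderOf_eq_one, one_pow]
  -- the cocycle `u`
  set u : ℕ → G := fun i => (x ^ i)⁻¹ * y ^ i with hu
  have hurec : ∀ i, u (i + 1) = x⁻¹ * u i * x * n := by
    intro i
    simp only [hu, hn, pow_succ, mul_inv_rev]
    group
  have humem : ∀ i, u i ∈ Z := by
    intro i
    induction i with
    | zero => simpa [hu] using Z.one_mem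
    | succ i ih =>
      rw [hurec i]
      refine Z.mul_mem ?_ hxy
      have : x⁻¹ * u i * x = x⁻¹ * u i * (x⁻¹)⁻¹ := by rw [inv_inv]
      rw [this]
      exact ‹Z.Normal›.conj_mem _ ih _
  set v : ℕ → Z := fun i => ⟨u i, humem i⟩ with hv
  set n' : Z := ⟨n, hxy⟩ with hn'
  set P : Z := ∏ i ∈ Finset.range m, v i with hP
  -- conjugation by `x⁻¹` as an automorphism of `Z`
  set φ : Z →* Z := (MulAut.conjNormal (x⁻¹ : G) : MulAut Z).toMonoidHom with hφ
  have hφ_apply : ∀ z : Z, (φ z : G) = x⁻¹ * z * x := by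
    intro z
    simp [hφ, MulAut.conjNormal_apply]
  have hφv : ∀ i, φ (v i) = v (i + 1) * n'⁻¹ := by
    intro i
    ext
    rw [hφ_apply]
    push_cast [hv, hn']
    rw [hurec i]
    group
  have hv0 : v 0 = 1 := by ext; simp [hv, hu]
  have hvm : v m = 1 := by ext; simp [hv, hu, hxm, hym]
  have hφP : φ P = P * (n' ^ m)⁻¹ := by
    rw [hP, map_prod]
    simp only [hφv]
    rw [Finset.prod_mul_distrib, Finset.prod_const, Finset.card_range]
    congr 1
    · have := Finset.prod_range_succ' (fun i => v i) m
      rw [Finset.prod_range_succ] at this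
      rw [hvm, mul_one, hv0, mul_one] at this
      exact this.symm
    · rw [inv_pow]
  -- the conjugating element
  set c : G := ((P⁻¹ ^ s : Z) : G) with hc
  have hcZ : c ∈ Z := (P⁻¹ ^ s : Z).2
  have hkey : x⁻¹ * (P : G) * x = (P : G) * (n ^ m)⁻¹ := by
    have := congrArg (Subgroup.subtype Z) hφP
    simpa [hφ_apply] using this
  have hconjc : x⁻¹ * c * x = n * c := by
    have h1 : x⁻¹ * c * x = (x⁻¹ * (P : G) * x)⁻¹ ^ s := by
      rw [hc]
      push_cast
      rw [show (x⁻¹ * (P : G) * x)⁻¹ = x⁻¹ * (P : G)⁻¹ * (x⁻¹)⁻¹ by group, conj_pow]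
      group
    rw [h1, hkey]
    have h0 : Commute (n : G) ((P : G)⁻¹) :=
      Subgroup.mul_comm_of_mem_isMulCommutative (H := Z) hxy (Z.inv_mem P.2)
    have hcomm : Commute ((n : G) ^ m) ((P : G)⁻¹) := h0.pow_left m
    rw [mul_inv_rev, inv_inv]
    rw [hcomm.mul_pow]
    have hnms : (n : G) ^ (m * s) = n := by
      have : n ^ (m * s) = n ^ 1 := pow_eq_pow_iff_modEq.mpr hs
      simpa using this
    rw [← pow_mul, hnms]
    have hPc : (P : G)⁻¹ ^ s = c := by rw [hc]; push_cast; ring_nf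
    rw [hPc]
  -- conclude
  rw [isConj_iff]
  refine ⟨c, ?_⟩
  have : c * x = x * (n * c) := by
    rw [← hconjc]; group
  rw [this, hyn]
  have hcn : n * c * c⁻¹ = n := by group
  rw [mul_assoc, hcn]

/-- Two `p`-regular elements in the same coset of a normal `p`-subgroup are conjugate. -/
private lemma isConj_of_pGroup_aux {p : ℕ} (hp : p.Prime) :
    ∀ (k : ℕ) {G : Type u} [Group G] [Finite G] (N : Subgroup G) [N.Normal],
      Nat.card N ≤ k → IsPGroup p N → ∀ {x y : G}, ¬ p ∣ orderOf x → ¬ p ∣ orderOf y →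
      x⁻¹ * y ∈ N → IsConj x y := by
  intro k
  induction k with
  | zero =>
    intro G _ _ N _ hcard _ x y _ _ _
    have : 0 < Nat.card N := Nat.card_pos
    omega
  | succ k ih =>
    intro G _ _ N _ hcard hN x y hx hy hxy
    by_cases h1 : Nat.card N = 1
    · have hbot : N = ⊥ := Subgroup.card_eq_one.mp h1
      rw [hbot, Subgroup.mem_bot, inv_mul_eq_one] at hxy
      exact hxy ▸ IsConj.refl x
    · -- `N` is nontrivial; pass to `G ⧸ Z` where `Z` is the (image of the) center of `N`
      haveI : Nontrivial N := (Subgroup.nontrivial_iff_ne_bot N).mpr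
        (fun h => h1 (by rw [h]; exact Nat.card_eq_one_iff_unique.mpr ⟨inferInstance, inferInstance⟩))
      haveI : Fact p.Prime := ⟨hp⟩
      haveI hZnt : Nontrivial (Subgroup.center N) := hN.center_nontrivial
      set Z : Subgroup G := Subgroup.map N.subtype (Subgroup.center N) with hZdef
      haveI hZn : Z.Normal := by
        constructor
        intro z hz g
        rw [hZdef, Subgroup.mem_map] at hz ⊢
        obtain ⟨⟨c, hcN⟩, hcZ, rfl⟩ := hz
        refine ⟨⟨g * c * g⁻¹, ‹N.Normal›.conj_mem c hcN g⟩, ?_, rfl⟩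
        rw [Subgroup.mem_center_iff] at hcZ ⊢
        rintro ⟨a, haN⟩
        have haN' : g⁻¹ * a * g ∈ N := by
          have := ‹N.Normal›.conj_mem a haN g⁻¹
          simpa using this
        have := hcZ ⟨g⁻¹ * a * g, haN'⟩
        apply Subtype.ext
        have hcomm : (g⁻¹ * a * g) * c = c * (g⁻¹ * a * g) := congrArg Subtype.val this
        simp only [Subgroup.coe_mul, MulMemClass.mk_mul_mk]
        calc a * (g * c * g⁻¹) = g * ((g⁻¹ * a * g) * c) * g⁻¹ := by group
          _ = g * (c * (g⁻¹ * a * g)) * g⁻¹ := by rw [hcomm]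
          _ = g * c * g⁻¹ * a := by group
      have hZp : IsPGroup p Z := (hN.to_subgroup (Subgroup.center N)).map N.subtype
      haveI : IsMulCommutative Z := Subgroup.map_isMulCommutative _ _
      set f := QuotientGroup.mk' Z with hf
      set Nb := Subgroup.map f N with hNb
      haveI : Nb.Normal := by rw [hNb, hf]; infer_instance
      have hNbp : IsPGroup p Nb := hN.map f
      -- the cardinality drops
      have hcard' : Nat.card Nb ≤ k := by
        set φ : N →* G ⧸ Z := f.comp N.subtype with hφ
        have hrange : φ.range = Nb := by
          rw [hφ, MonoidHom.range_comp, Subgroup.range_subtype]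
        have hcardeq : Nat.card N = Nat.card Nb * Nat.card φ.ker := by
          rw [Subgroup.card_eq_card_quotient_mul_card_subgroup φ.ker]
          congr 1
          rw [← hrange]
          exact Nat.card_congr (QuotientGroup.quotientKerEquivRange φ).toEquiv
        haveI : Nontrivial φ.ker := by
          obtain ⟨z, hz⟩ := exists_ne (1 : Subgroup.center N)
          have hmem : (z : N) ∈ φ.ker := by
            rw [MonoidHom.mem_ker, hφ, MonoidHom.comp_apply, hf]
            exact (QuotientGroup.eq_one_iff _).mpr (Subgroup.mem_map_of_mem N.subtype z.2)
          refine ⟨⟨⟨(z : N), hmem⟩, 1, fun h => hz ?_⟩⟩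
          have h1 : ((z : N) : N) = 1 := congrArg Subtype.val h
          exact OneMemClass.coe_eq_one.mp h1
        have h2 : 1 < Nat.card φ.ker := Finite.one_lt_card
        have h3 : Nat.card Nb * 2 ≤ Nat.card N := by
          rw [hcardeq]
          exact Nat.mul_le_mul_left _ h2
        have h4 : 0 < Nat.card Nb := Nat.card_pos
        omega
      have hx' : ¬ p ∣ orderOf (f x) := fun h => hx (h.trans (orderOf_map_dvd f x))
      have hy' : ¬ p ∣ orderOf (f y) := fun h => hy (h.trans (orderOf_map_dvd f y))
      have hmem : (f x)⁻¹ * (f y) ∈ Nb := by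
        rw [← map_inv, ← map_mul]
        exact Subgroup.mem_map_of_mem f hxy
      obtain ⟨cq, hcq⟩ := isConj_iff.mp (ih Nb hcard' hNbp hx' hy' hmem)
      obtain ⟨g, rfl⟩ := QuotientGroup.mk'_surjective Z cq
      have hxy2 : (g * x * g⁻¹)⁻¹ * y ∈ Z := by
        have h2 : f ((g * x * g⁻¹)⁻¹ * y) = 1 := by
          rw [map_mul, map_inv, map_mul, map_mul, map_inv, hcq]
          group
        rwa [← QuotientGroup.ker_mk' Z, MonoidHom.mem_ker]
      have hx2 : ¬ p ∣ orderOf (g * x * g⁻¹) := by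
        have : orderOf (g * x * g⁻¹) = orderOf x := by
          have := orderOf_injective (MulAut.conj g).toMonoidHom (MulAut.conj g).injective x
          simpa [MulAut.conj_apply] using this
        rwa [this]
      exact (isConj_iff.mpr ⟨g, rfl⟩).trans (isConj_of_abelian hp Z hZp hx2 hy hxy2)

end Aux

theorem card_p_regular_classes_quotient_pCore (G : Type*) [Group G] [Finite G]
    (p : ℕ) (hp : p.Prime) (N : Subgroup G) [N.Normal] (hN : IsPGroup p N)
    (hmax : ∀ K : Subgroup G, K.Normal → IsPGroup p K → K ≤ N) :
    Nat.card {C : ConjClasses G | ∃ g : G, ¬ p ∣ orderOf g ∧ ConjClasses.mk g = C}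
      = Nat.card {C : ConjClasses (G ⧸ N) |
          ∃ g : G ⧸ N, ¬ p ∣ orderOf g ∧ ConjClasses.mk g = C} := by
  classical
  set f := QuotientGroup.mk' N with hf
  have key : ∀ {x y : G}, ¬ p ∣ orderOf x → ¬ p ∣ orderOf y → x⁻¹ * y ∈ N → IsConj x y :=
    fun {x y} hx hy hxy =>
      isConj_of_pGroup_aux hp (Nat.card N) N le_rfl hN hx hy hxy
  set S := {C : ConjClasses G | ∃ g : G, ¬ p ∣ orderOf g ∧ ConjClasses.mk g = C} with hS
  set T := {C : ConjClasses (G ⧸ N) |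
      ∃ g : G ⧸ N, ¬ p ∣ orderOf g ∧ ConjClasses.mk g = C} with hT
  have hFmem : ∀ C : S, ConjClasses.map f C.1 ∈ T := by
    rintro ⟨C, g, hg, rfl⟩
    exact ⟨f g, fun h => hg (h.trans (orderOf_map_dvd f g)), rfl⟩
  set F : S → T := fun C => ⟨ConjClasses.map f C.1, hFmem C⟩ with hF
  have hinj : Function.Injective F := by
    rintro ⟨C₁, hC₁⟩ ⟨C₂, hC₂⟩ h
    obtain ⟨g₁, hg₁, rfl⟩ := hC₁
    obtain ⟨g₂, hg₂, rfl⟩ := hC₂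
    have h' : ConjClasses.mk (f g₁) = ConjClasses.mk (f g₂) := congrArg Subtype.val h
    obtain ⟨cq, hcq⟩ := isConj_iff.mp (ConjClasses.mk_eq_mk_iff_isConj.mp h')
    obtain ⟨c, rfl⟩ := QuotientGroup.mk'_surjective N cq
    have hmem : (c * g₁ * c⁻¹)⁻¹ * g₂ ∈ N := by
      have h2 : f ((c * g₁ * c⁻¹)⁻¹ * g₂) = 1 := by
        rw [map_mul, map_inv, map_mul, map_mul, map_inv, hcq]
        group
      rwa [← QuotientGroup.ker_mk' N, MonoidHom.mem_ker]
    have hx2 : ¬ p ∣ orderOf (c * g₁ * c⁻¹) := by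
      have : orderOf (c * g₁ * c⁻¹) = orderOf g₁ := by
        have := orderOf_injective (MulAut.conj c).toMonoidHom (MulAut.conj c).injective g₁
        simpa [MulAut.conj_apply] using this
      rwa [this]
    have : IsConj g₁ g₂ := (isConj_iff.mpr ⟨c, rfl⟩).trans (key hx2 hg₂ hmem)
    exact Subtype.ext (ConjClasses.mk_eq_mk_iff_isConj.mpr this)
  have hsurj : Function.Surjective F := by
    rintro ⟨D, q, hq, rfl⟩
    obtain ⟨g, hg, hfg⟩ := lift_p_regular (QuotientGroup.mk'_surjective N) hp q hq
    exact ⟨⟨ConjClasses.mk g, g, hg, rfl⟩, Subtype.ext (by simp [hF, ← hfg]; rfl)⟩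
  exact Nat.card_eq_of_bijective F ⟨hinj, hsurj⟩
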